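/- arXiv:1901.03000 — 2 statements merged into one kernel-verified Lean document; each statement's English description precedes it below -/
import Mathlib

section
/- Assume k ≤ LR and that R divides k. Then w_i(π*(s*)) = w_i(π^(k)) for every 1 ≤ i ≤ k, and consequently MC(π*(s*)) = MC(π^(k)); that is, when R | k, adding a separate node does not change the system capacity. -/
/-- Relative location `h_π(i) = #{1 ≤ j ≤ i : π j = π i}`. -/
def relLoc (π : ℕ → ℕ) (i : ℕ) : ℕ :=
  ((Finset.Icc 1 i).filter (fun j => π j = π i)).card

/-- Intra-cluster coefficient `a_i(π) = d_I + 1 − h_π(i)` (truncated subtraction). -/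
def aCoef (dI : ℕ) (π : ℕ → ℕ) (i : ℕ) : ℕ :=
  dI + 1 - relLoc π i

/-- Cross-cluster coefficient `b_i(π) = max(0, d_C − (i − h_π(i)))` (truncated subtraction). -/
def bCoef (dC : ℕ) (π : ℕ → ℕ) (i : ℕ) : ℕ :=
  dC - (i - relLoc π i)

/-- Part incoming weight `w_i(π)`: for a separate position (`π i = 0`) it is
`(d_I + d_C + 1 − i)·β_C`, otherwise `a_i(π)·β_I + b_i(π)·β_C`. -/
noncomputable def weight (dI dC : ℕ) (βI βC : ℝ) (π : ℕ → ℕ) (i : ℕ) : ℝ :=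
  if π i = 0 then ((dI + dC + 1 - i : ℕ) : ℝ) * βC
  else (aCoef dI π i : ℝ) * βI + (bCoef dC π i : ℝ) * βC

/-- Min-cut `MC(π) = Σ_{i=1}^k min(α, w_i(π))`. -/
noncomputable def MC (k dI dC : ℕ) (βI βC α : ℝ) (π : ℕ → ℕ) : ℝ :=
  ∑ i ∈ Finset.Icc 1 k, min α (weight dI dC βI βC π i)

/-- A cluster order: a `k`-tuple with entries in `{0, 1, …, L}`. -/
def IsClusterOrder (L k : ℕ) (π : ℕ → ℕ) : Prop :=
  ∀ i, 1 ≤ i → i ≤ k → π i ≤ L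

/-- A selected node distribution `(s_0, s_1, …, s_L)`:
`R ≥ s_1 ≥ s_2 ≥ … ≥ s_L` and `s_0 + s_1 + … + s_L = k`. -/
def IsDist (L R k : ℕ) (s : ℕ → ℕ) : Prop :=
  (∀ i, 1 ≤ i → i + 1 ≤ L → s (i + 1) ≤ s i) ∧
  (∀ i, 1 ≤ i → i ≤ L → s i ≤ R) ∧
  ∑ i ∈ Finset.range (L + 1), s i = k

/-- `π ∈ Π(s)`: `π` is a cluster order with `#{1 ≤ j ≤ k : π j = c} = s c` for all `0 ≤ c ≤ L`. -/
def MemPi (L k : ℕ) (s : ℕ → ℕ) (π : ℕ → ℕ) : Prop :=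
  IsClusterOrder L k π ∧
  ∀ c, c ≤ L → ((Finset.Icc 1 k).filter (fun j => π j = c)).card = s c

/-- Vertical order of distribution `s` (possibly with separate entries, whose positions are
not constrained here):  over the cluster positions (`π i ≠ 0`) in increasing order, relative
locations are nondecreasing, with ties broken by increasing cluster index. -/
def IsVerticalOrder (L k : ℕ) (s : ℕ → ℕ) (π : ℕ → ℕ) : Prop :=
  MemPi L k s π ∧
  ∀ i j, 1 ≤ i → i < j → j ≤ k → π i ≠ 0 → π j ≠ 0 →
    relLoc π i ≤ relLoc π j ∧ (relLoc π i = relLoc π j → π i < π j)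

/-- The distribution `s*` (no separate node): `s*_0 = 0`, `s*_i = R` for `1 ≤ i ≤ ⌊k/R⌋`,
`s*_{⌊k/R⌋+1} = k − ⌊k/R⌋·R`, and `0` beyond. -/
def sStar0 (R k : ℕ) : ℕ → ℕ := fun i =>
  if i = 0 then 0
  else if i ≤ k / R then R
  else if i = k / R + 1 then k - k / R * R
  else 0

/-- The distribution with one separate node: `s_0 = 1`, `s_i = R` for `1 ≤ i ≤ ⌊(k−1)/R⌋`,
`s_{⌊(k−1)/R⌋+1} = (k−1) − ⌊(k−1)/R⌋·R`, and `0` beyond. -/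
def sStar1 (R k : ℕ) : ℕ → ℕ := fun i =>
  if i = 0 then 1
  else if i ≤ (k - 1) / R then R
  else if i = (k - 1) / R + 1 then (k - 1) - (k - 1) / R * R
  else 0

/-- `π^(j)`: the cluster order with exactly one separate entry, located at position `j`,
whose cluster entries form the vertical order of the distribution `sStar1 R k`. -/
def IsPiJ (L R k j : ℕ) (π : ℕ → ℕ) : Prop :=
  π j = 0 ∧ IsVerticalOrder L k (sStar1 R k) π

lemma one_le_relLoc (π : ℕ → ℕ) (i : ℕ) (hi : 1 ≤ i) : 1 ≤ relLoc π i := by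
  have h : i ∈ (Finset.Icc 1 i).filter (fun j => π j = π i) := by
    simp [Finset.mem_Icc, hi]
  exact Finset.card_pos.mpr ⟨i, h⟩

lemma encode_inj (L a b c d : ℕ) (hc : 1 ≤ c) (hcL : c ≤ L) (hd : 1 ≤ d) (hdL : d ≤ L)
    (h : a * (L+1) + c = b * (L+1) + d) : a = b := by
  rcases Nat.lt_trichotomy a b with h'|h'|h'
  · have h2 : (a+1) * (L+1) ≤ b * (L+1) := Nat.mul_le_mul_right _ h'
    have h3 : (a+1)*(L+1) = a*(L+1) + (L+1) := by ring
    omega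
  · exact h'
  · have h2 : (b+1) * (L+1) ≤ a * (L+1) := Nat.mul_le_mul_right _ h'
    have h3 : (b+1)*(L+1) = b*(L+1) + (L+1) := by ring
    omega

lemma mono_eq_on {n : ℕ} (f g : ℕ → ℕ)
    (hf : ∀ i j, 1 ≤ i → i < j → j ≤ n → f i < f j)
    (hg : ∀ i j, 1 ≤ i → i < j → j ≤ n → g i < g j)
    (hfg : ∀ i, 1 ≤ i → i ≤ n → ∃ j, 1 ≤ j ∧ j ≤ n ∧ f i = g j) :
    ∀ i, 1 ≤ i → i ≤ n → f i = g i := by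
  classical
  set S : Finset ℕ := (Finset.Icc 1 n).image g with hS
  have hinj : Set.InjOn g (Finset.Icc 1 n) := by
    intro a ha b hb hab
    simp only [Finset.coe_Icc, Set.mem_Icc] at ha hb
    by_contra hne
    rcases Nat.lt_or_ge a b with h'|h'
    · exact absurd hab (Nat.ne_of_lt (hg a b ha.1 h' hb.2))
    · have := hg b a hb.1 (lt_of_le_of_ne h' (Ne.symm hne)) ha.2
      omega
  have hcard : S.card = n := by
    rw [hS, Finset.card_image_of_injOn hinj, Nat.card_Icc]; omega
  have hFmem : ∀ x : Fin n, f (x.1 + 1) ∈ S := by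
    intro x
    have hx2 : x.1 < n := x.2
    obtain ⟨j, hj1, hj2, hj3⟩ := hfg (x.1+1) (by omega) (by omega)
    rw [hj3, hS]
    exact Finset.mem_image_of_mem g (Finset.mem_Icc.mpr ⟨hj1, hj2⟩)
  have hGmem : ∀ x : Fin n, g (x.1 + 1) ∈ S := by
    intro x
    have hx2 : x.1 < n := x.2
    exact Finset.mem_image_of_mem g (Finset.mem_Icc.mpr ⟨by omega, by omega⟩)
  have hFmono : StrictMono (fun x : Fin n => f (x.1+1)) := by
    intro a b hab
    have h1 : a.1 < b.1 := hab
    have h2 : b.1 < n := b.2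
    exact hf _ _ (by omega) (by omega) (by omega)
  have hGmono : StrictMono (fun x : Fin n => g (x.1+1)) := by
    intro a b hab
    have h1 : a.1 < b.1 := hab
    have h2 : b.1 < n := b.2
    exact hg _ _ (by omega) (by omega) (by omega)
  have h1 := Finset.orderEmbOfFin_unique hcard hFmem hFmono
  have h2 := Finset.orderEmbOfFin_unique hcard hGmem hGmono
  intro i hi1 hi2
  have ef := congrFun h1 (⟨i-1, by omega⟩ : Fin n)
  have eg := congrFun h2 (⟨i-1, by omega⟩ : Fin n)
  simp only at ef eg
  rw [Nat.sub_add_cancel hi1] at ef eg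
  rw [ef, eg]

lemma relLoc_eq (L n m : ℕ) (s π : ℕ → ℕ) (hm : 1 ≤ m) (hmL : m ≤ L)
    (hπ1 : ∀ i, 1 ≤ i → i ≤ n → 1 ≤ π i) (hπL : ∀ i, 1 ≤ i → i ≤ n → π i ≤ L)
    (hπm : ∀ i, 1 ≤ i → i ≤ n → π i ≤ m)
    (hrb : ∀ i, 1 ≤ i → i ≤ n → relLoc π i ≤ s (π i))
    (hjn : ∀ c h, 1 ≤ c → c ≤ m → 1 ≤ h → h ≤ s c → (h-1)*m + c ≤ n)
    (hvo : ∀ i j, 1 ≤ i → i < j → j ≤ n →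
      relLoc π i ≤ relLoc π j ∧ (relLoc π i = relLoc π j → π i < π j)) :
    ∀ i, 1 ≤ i → i ≤ n → relLoc π i = (i-1)/m + 1 := by
  have hgmono : ∀ i j, 1 ≤ i → i < j → j ≤ n →
      ((i-1)/m + 1) * (L+1) + ((i-1) % m + 1) < ((j-1)/m + 1) * (L+1) + ((j-1) % m + 1) := by
    intro i j hi hij hj
    have hq : (i-1)/m ≤ (j-1)/m := Nat.div_le_div_right (by omega)
    have hrm : (i-1) % m < m := Nat.mod_lt _ (by omega)
    have hrm' : (j-1) % m < m := Nat.mod_lt _ (by omega)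
    rcases eq_or_lt_of_le hq with he|hlt
    · have d1 := Nat.div_add_mod (i-1) m
      have d2 := Nat.div_add_mod (j-1) m
      have e1 : ((i-1)/m + 1) * (L+1) = ((j-1)/m + 1) * (L+1) := by rw [he]
      have e2 : m * ((i-1)/m) = m * ((j-1)/m) := by rw [he]
      omega
    · have e1 : ((i-1)/m + 1 + 1) * (L+1) ≤ ((j-1)/m + 1) * (L+1) :=
        Nat.mul_le_mul_right _ (by omega)
      have e2 : ((i-1)/m + 1 + 1) * (L+1) = ((i-1)/m + 1) * (L+1) + (L+1) := by ring
      omega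
  have hfmono : ∀ i j, 1 ≤ i → i < j → j ≤ n →
      relLoc π i * (L+1) + π i < relLoc π j * (L+1) + π j := by
    intro i j hi hij hj
    obtain ⟨h1, h2⟩ := hvo i j hi hij hj
    rcases eq_or_lt_of_le h1 with he|hlt
    · have := h2 he
      have e1 : relLoc π i * (L+1) = relLoc π j * (L+1) := by rw [he]
      omega
    · have e1 : (relLoc π i + 1) * (L+1) ≤ relLoc π j * (L+1) :=
        Nat.mul_le_mul_right _ (by omega)
      have e2 : (relLoc π i + 1) * (L+1) = relLoc π i * (L+1) + (L+1) := by ring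
      have h3 := hπL i hi (by omega)
      have h4 := hπ1 j (by omega) hj
      omega
  have hfg : ∀ i, 1 ≤ i → i ≤ n → ∃ j, 1 ≤ j ∧ j ≤ n ∧
      relLoc π i * (L+1) + π i = ((j-1)/m + 1) * (L+1) + ((j-1) % m + 1) := by
    intro i hi hin
    have hc1 := hπ1 i hi hin
    have hcm := hπm i hi hin
    have hr1 := one_le_relLoc π i hi
    refine ⟨(relLoc π i - 1) * m + π i, by omega,
      hjn (π i) (relLoc π i) hc1 hcm hr1 (hrb i hi hin), ?_⟩
    have e0 : (relLoc π i - 1) * m + π i - 1 = (π i - 1) + (relLoc π i - 1) * m := by omega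
    rw [e0, Nat.add_mul_div_right _ _ (by omega : 0 < m), Nat.add_mul_mod_self_right,
      Nat.div_eq_of_lt (by omega), Nat.mod_eq_of_lt (by omega)]
    have e3 : 0 + (relLoc π i - 1) + 1 = relLoc π i := by omega
    rw [e3]
    omega
  intro i hi hin
  have key := mono_eq_on (fun i => relLoc π i * (L+1) + π i)
    (fun i => ((i-1)/m + 1) * (L+1) + ((i-1) % m + 1)) hfmono hgmono hfg i hi hin
  have hc1 := hπ1 i hi hin
  have hcL := hπL i hi hin
  have hmod : (i-1) % m < m := Nat.mod_lt _ (by omega)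
  exact encode_inj L _ _ _ _ hc1 hcL (by omega) (by omega) key

/-- if `R ∣ k` then `w_i(π*(s*)) = w_i(π^(k))` for all `i`, hence
`MC(π*(s*)) = MC(π^(k))`: adding a separate node keeps the capacity. -/
theorem stmt17 (L R k dI dC : ℕ) (βI βC α : ℝ)
    (hL : 1 ≤ L) (hR : 2 ≤ R) (hk : 2 ≤ k)
    (hdI : dI = R - 1) (hdC : 1 ≤ dC) (hkd : k ≤ dI + dC)
    (hβ : βC ≤ βI) (hβC : 0 < βC) (hα : 0 < α)
    (hkLR : k ≤ L * R) (hdvd : R ∣ k)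
    (πs : ℕ → ℕ) (hπs : IsVerticalOrder L k (sStar0 R k) πs)
    (πk : ℕ → ℕ) (hπk : IsPiJ L R k k πk) :
    (∀ i, 1 ≤ i → i ≤ k →
      weight dI dC βI βC πs i = weight dI dC βI βC πk i) ∧
    MC k dI dC βI βC α πs = MC k dI dC βI βC α πk := by
  obtain ⟨⟨hsCO, hsCnt⟩, hsVO⟩ := hπs
  obtain ⟨hk0, ⟨hkCO, hkCnt⟩, hkVO⟩ := hπk
  have hR0 : 0 < R := by omega
  have hRk : R ≤ k := Nat.le_of_dvd (by omega) hdvd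
  obtain ⟨m, hkm⟩ : ∃ m, k = m * R := by
    obtain ⟨c, hc⟩ := hdvd; exact ⟨c, by rw [hc, Nat.mul_comm]⟩
  have hm1 : 1 ≤ m := by
    rcases Nat.eq_zero_or_pos m with h|h
    · rw [h, zero_mul] at hkm; omega
    · omega
  have hmL : m ≤ L := Nat.le_of_mul_le_mul_right (by omega) hR0
  have hdivm : k / R = m := by rw [hkm, Nat.mul_div_cancel _ hR0]
  have hmR : (m-1)*R + R = m * R := by
    have e2 : (m-1+1)*R = (m-1)*R + R := by ring
    have e3 : m-1+1 = m := by omega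
    rw [e3] at e2
    omega
  have hRm : (R-1)*m + m = m * R := by
    have e2 : (R-1+1)*m = (R-1)*m + m := by ring
    have e3 : R-1+1 = R := by omega
    rw [e3] at e2
    have e4 : R * m = m * R := Nat.mul_comm R m
    omega
  have hdivm1 : (k-1)/R = m - 1 := by
    have e : k - 1 = (R-1) + (m-1)*R := by omega
    rw [e, Nat.add_mul_div_right _ _ hR0, Nat.div_eq_of_lt (by omega)]
    omega
  -- πs has no separate entries
  have hs0count : ((Finset.Icc 1 k).filter (fun j => πs j = 0)).card = 0 := by
    have h := hsCnt 0 (Nat.zero_le L)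
    simpa [sStar0] using h
  have hsne : ∀ i, 1 ≤ i → i ≤ k → πs i ≠ 0 := by
    intro i h1 h2 h0
    have hmem : i ∈ (Finset.Icc 1 k).filter (fun j => πs j = 0) := by
      simp [Finset.mem_Icc, Finset.mem_filter, h1, h2, h0]
    rw [Finset.card_eq_zero] at hs0count
    rw [hs0count] at hmem
    exact absurd hmem (Finset.notMem_empty i)
  have hsπ1 : ∀ i, 1 ≤ i → i ≤ k → 1 ≤ πs i := by
    intro i h1 h2
    have := hsne i h1 h2; omega
  -- πk: the unique separate entry is at position k
  have hk0count : ((Finset.Icc 1 k).filter (fun j => πk j = 0)).card = 1 := by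
    have h := hkCnt 0 (Nat.zero_le L)
    simpa [sStar1] using h
  have hkne : ∀ i, 1 ≤ i → i ≤ k - 1 → πk i ≠ 0 := by
    intro i h1 h2 h0
    have hsub : ({i, k} : Finset ℕ) ⊆ (Finset.Icc 1 k).filter (fun j => πk j = 0) := by
      intro x hx
      simp only [Finset.mem_insert, Finset.mem_singleton] at hx
      rcases hx with rfl|rfl
      · simp only [Finset.mem_filter, Finset.mem_Icc]
        exact ⟨⟨h1, by omega⟩, h0⟩
      · simp only [Finset.mem_filter, Finset.mem_Icc]
        exact ⟨⟨by omega, le_rfl⟩, hk0⟩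
    have hcard2 : ({i, k} : Finset ℕ).card = 2 := by
      rw [Finset.card_insert_of_notMem (by simp; omega), Finset.card_singleton]
    have := Finset.card_le_card hsub
    omega
  have hkπ1 : ∀ i, 1 ≤ i → i ≤ k - 1 → 1 ≤ πk i := by
    intro i h1 h2
    have := hkne i h1 h2; omega
  -- counts of πk over [1, k-1]
  have hkCnt' : ∀ c, 1 ≤ c → c ≤ L →
      ((Finset.Icc 1 (k-1)).filter (fun j => πk j = c)).card = sStar1 R k c := by
    intro c hc1 hcL
    rw [← hkCnt c hcL]
    congr 1
    ext j
    simp only [Finset.mem_filter, Finset.mem_Icc]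
    constructor
    · rintro ⟨⟨hj1, hj2⟩, hj3⟩; exact ⟨⟨hj1, by omega⟩, hj3⟩
    · rintro ⟨⟨hj1, hj2⟩, hj3⟩
      refine ⟨⟨hj1, ?_⟩, hj3⟩
      by_contra h
      have : j = k := by omega
      rw [this, hk0] at hj3; omega
  -- relLoc bounds
  have hsrb : ∀ i, 1 ≤ i → i ≤ k → relLoc πs i ≤ sStar0 R k (πs i) := by
    intro i h1 h2
    have hsub : (Finset.Icc 1 i).filter (fun j => πs j = πs i) ⊆
        (Finset.Icc 1 k).filter (fun j => πs j = πs i) :=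
      Finset.filter_subset_filter _ (Finset.Icc_subset_Icc_right h2)
    have h := Finset.card_le_card hsub
    rw [hsCnt (πs i) (hsCO i h1 h2)] at h
    exact h
  have hkrb : ∀ i, 1 ≤ i → i ≤ k - 1 → relLoc πk i ≤ sStar1 R k (πk i) := by
    intro i h1 h2
    have hsub : (Finset.Icc 1 i).filter (fun j => πk j = πk i) ⊆
        (Finset.Icc 1 (k-1)).filter (fun j => πk j = πk i) :=
      Finset.filter_subset_filter _ (Finset.Icc_subset_Icc_right h2)
    have h := Finset.card_le_card hsub
    rw [hkCnt' (πk i) (hkπ1 i h1 h2) (hkCO i h1 (by omega))] at h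
    exact h
  -- cluster indices are at most m
  have hsπm : ∀ i, 1 ≤ i → i ≤ k → πs i ≤ m := by
    intro i h1 h2
    by_contra h
    push_neg at h
    have hle := hsrb i h1 h2
    have h0 : sStar0 R k (πs i) = 0 := by
      simp only [sStar0]
      rw [if_neg (by omega), if_neg (by rw [hdivm]; omega)]
      split_ifs with h'
      · rw [hdivm]
        omega
      · rfl
    have := one_le_relLoc πs i h1
    omega
  have hkπm : ∀ i, 1 ≤ i → i ≤ k - 1 → πk i ≤ m := by
    intro i h1 h2
    by_contra h
    push_neg at h
    have hle := hkrb i h1 h2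
    have h0 : sStar1 R k (πk i) = 0 := by
      simp only [sStar1]
      rw [if_neg (by omega), if_neg (by rw [hdivm1]; omega),
        if_neg (by rw [hdivm1]; omega)]
    have := one_le_relLoc πk i h1
    omega
  -- position bounds (hjn)
  have hsjn : ∀ c h, 1 ≤ c → c ≤ m → 1 ≤ h → h ≤ sStar0 R k c → (h-1)*m + c ≤ k := by
    intro c h hc1 hcm hh1 hhs
    have hsv : sStar0 R k c = R := by
      simp only [sStar0]
      rw [if_neg (by omega), if_pos (by rw [hdivm]; omega)]
    rw [hsv] at hhs
    have e1 : (h-1)*m ≤ (R-1)*m := Nat.mul_le_mul_right _ (by omega)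
    omega
  have hkjn : ∀ c h, 1 ≤ c → c ≤ m → 1 ≤ h → h ≤ sStar1 R k c → (h-1)*m + c ≤ k - 1 := by
    intro c h hc1 hcm hh1 hhs
    rcases Nat.lt_or_ge c m with hlt|hge
    · have hsv : sStar1 R k c = R := by
        simp only [sStar1]
        rw [if_neg (by omega), if_pos (by rw [hdivm1]; omega)]
      rw [hsv] at hhs
      have e1 : (h-1)*m ≤ (R-1)*m := Nat.mul_le_mul_right _ (by omega)
      omega
    · have hcm' : c = m := by omega
      have hsv : sStar1 R k c = R - 1 := by
        simp only [sStar1]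
        rw [if_neg (by omega), if_neg (by rw [hdivm1]; omega),
          if_pos (by rw [hdivm1]; omega), hdivm1]
        omega
      rw [hsv] at hhs
      have e1 : (h-1)*m ≤ (R-2)*m := Nat.mul_le_mul_right _ (by omega)
      have e8 : (R-2+1)*m = (R-2)*m + m := by ring
      have e9 : R-2+1 = R-1 := by omega
      rw [e9] at e8
      omega
  -- the relLoc formulas
  have hsRL : ∀ i, 1 ≤ i → i ≤ k → relLoc πs i = (i-1)/m + 1 :=
    relLoc_eq L k m (sStar0 R k) πs hm1 hmL hsπ1 hsCO hsπm hsrb hsjn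
      (fun i j hi hij hj => hsVO i j hi hij hj (hsne i hi (by omega)) (hsne j (by omega) hj))
  have hkRL : ∀ i, 1 ≤ i → i ≤ k - 1 → relLoc πk i = (i-1)/m + 1 :=
    relLoc_eq L (k-1) m (sStar1 R k) πk hm1 hmL hkπ1
      (fun i h1 h2 => hkCO i h1 (by omega)) hkπm hkrb hkjn
      (fun i j hi hij hj => hkVO i j hi hij (by omega)
        (hkne i hi (by omega)) (hkne j (by omega) hj))
  -- weights agree
  have hW : ∀ i, 1 ≤ i → i ≤ k → weight dI dC βI βC πs i = weight dI dC βI βC πk i := by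
    intro i h1 h2
    by_cases hik : i = k
    · subst hik
      have hrk : relLoc πs i = R := by
        rw [hsRL i (by omega) le_rfl]
        have e0 : i - 1 = (m-1) + (R-1)*m := by omega
        rw [e0, Nat.add_mul_div_right _ _ (by omega : 0 < m), Nat.div_eq_of_lt (by omega)]
        omega
      have hs' := hsne i (by omega) le_rfl
      simp only [weight, if_neg hs', if_pos hk0, aCoef, bCoef, hrk]
      have eA : dI + 1 - R = 0 := by omega
      have eB : dC - (i - R) = dI + dC + 1 - i := by omega
      rw [eA, eB]
      push_cast
      ring
    · have hs' := hsne i h1 h2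
      have hk' := hkne i h1 (by omega)
      have hr : relLoc πs i = relLoc πk i := by
        rw [hsRL i h1 h2, hkRL i h1 (by omega)]
      simp only [weight, if_neg hs', if_neg hk', aCoef, bCoef, hr]
  refine ⟨hW, ?_⟩
  unfold MC
  refine Finset.sum_congr rfl fun i hi => ?_
  rw [Finset.mem_Icc] at hi
  rw [hW i hi.1 hi.2]
end

section
/- Assume k ≤ LR, k ≥ R, and that R does not divide k; set q = ⌊k/R⌋ and r = k mod R (so 1 ≤ r ≤ R − 1). Then: (i) w_i(π*(s*)) = w_i(π^(k)) for every 1 ≤ i ≤ (q+1)r − 1; (ii) w_{(q+1)r}(π*(s*)) − w_{(q+1)r}(π^(k)) = β_I − β_C; and (iii) w_k(π*(s*)) = w_k(π^(k)) = (d_C + R − k)·β_C. -/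
lemma relLoc_pos {π : ℕ → ℕ} {i : ℕ} (hi : 1 ≤ i) : 1 ≤ relLoc π i := by
  apply Finset.card_pos.mpr
  exact ⟨i, Finset.mem_filter.mpr ⟨Finset.mem_Icc.mpr ⟨hi, le_refl i⟩, rfl⟩⟩

lemma cluster_filter_card (π : ℕ → ℕ) (k c ℓ : ℕ) :
    ((Finset.Icc 1 k).filter (fun j => π j = c ∧ relLoc π j ≤ ℓ)).card
      = min (((Finset.Icc 1 k).filter (fun j => π j = c)).card) ℓ := by
  classical
  set S := (Finset.Icc 1 k).filter (fun j => π j = c) with hS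
  set n := S.card with hn
  have hrel : ∀ j ∈ S, relLoc π j = ((Finset.Icc 1 j).filter (fun j' => π j' = c)).card := by
    intro j hj
    have hc : π j = c := (Finset.mem_filter.mp hj).2
    simp [relLoc, hc]
  have hmem : ∀ j ∈ S, relLoc π j ∈ Finset.Icc 1 n := by
    intro j hj
    have hjk := Finset.mem_Icc.mp (Finset.mem_filter.mp hj).1
    rw [Finset.mem_Icc]
    refine ⟨relLoc_pos hjk.1, ?_⟩
    rw [hrel j hj]
    apply Finset.card_le_card
    intro x hx
    rw [Finset.mem_filter] at hx ⊢
    have hx1 := Finset.mem_Icc.mp hx.1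
    exact ⟨Finset.mem_Icc.mpr ⟨hx1.1, le_trans hx1.2 hjk.2⟩, hx.2⟩
  have hmono : ∀ j ∈ S, ∀ j' ∈ S, j < j' → relLoc π j < relLoc π j' := by
    intro j hj j' hj' hlt
    rw [hrel j hj, hrel j' hj']
    apply Finset.card_lt_card
    have hsub : (Finset.Icc 1 j).filter (fun j' => π j' = c)
        ⊆ (Finset.Icc 1 j').filter (fun j'' => π j'' = c) := by
      intro x hx
      rw [Finset.mem_filter] at hx ⊢
      have hx1 := Finset.mem_Icc.mp hx.1
      exact ⟨Finset.mem_Icc.mpr ⟨hx1.1, le_trans hx1.2 (le_of_lt hlt)⟩, hx.2⟩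
    rw [Finset.ssubset_iff_of_subset hsub]
    refine ⟨j', Finset.mem_filter.mpr ⟨Finset.mem_Icc.mpr
      ⟨(Finset.mem_Icc.mp (Finset.mem_filter.mp hj').1).1, le_refl j'⟩,
      (Finset.mem_filter.mp hj').2⟩, ?_⟩
    intro h
    have := (Finset.mem_Icc.mp (Finset.mem_filter.mp h).1).2
    omega
  have hinj : Set.InjOn (relLoc π) S := by
    intro a ha b hb hab
    by_contra hne
    rcases Nat.lt_or_ge a b with h | h
    · exact absurd hab (Nat.ne_of_lt (hmono a ha b hb h))
    · have hba : b < a := by omega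
      exact absurd hab.symm (Nat.ne_of_lt (hmono b hb a ha hba))
  have himg : S.image (relLoc π) = Finset.Icc 1 n := by
    apply Finset.eq_of_subset_of_card_le
    · intro x hx
      rcases Finset.mem_image.mp hx with ⟨j, hj, rfl⟩
      exact hmem j hj
    · rw [Finset.card_image_of_injOn hinj, Nat.card_Icc]; omega
  have hTS : (Finset.Icc 1 k).filter (fun j => π j = c ∧ relLoc π j ≤ ℓ)
      = S.filter (fun j => relLoc π j ≤ ℓ) := by
    rw [hS, Finset.filter_filter]
  rw [hTS]
  have h2 : (S.filter (fun j => relLoc π j ≤ ℓ)).card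
      = ((S.image (relLoc π)).filter (fun x => x ≤ ℓ)).card := by
    rw [Finset.filter_image,
      Finset.card_image_of_injOn (hinj.mono (Finset.coe_subset.mpr (Finset.filter_subset _ _)))]
  rw [h2, himg]
  have h3 : (Finset.Icc 1 n).filter (fun x => x ≤ ℓ) = Finset.Icc 1 (min n ℓ) := by
    ext x; simp only [Finset.mem_filter, Finset.mem_Icc]; omega
  rw [h3, Nat.card_Icc]; omega

lemma dc_eq_Icc (A : Finset ℕ) (h0 : ∀ j ∈ A, 1 ≤ j)
    (hdc : ∀ j ∈ A, ∀ i, 1 ≤ i → i ≤ j → i ∈ A) :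
    A = Finset.Icc 1 A.card := by
  have hsub : A ⊆ Finset.Icc 1 A.card := by
    intro j hj
    rw [Finset.mem_Icc]
    refine ⟨h0 j hj, ?_⟩
    have hss : Finset.Icc 1 j ⊆ A := fun i hi =>
      hdc j hj i (Finset.mem_Icc.mp hi).1 (Finset.mem_Icc.mp hi).2
    calc j = (Finset.Icc 1 j).card := by rw [Nat.card_Icc]; omega
      _ ≤ A.card := Finset.card_le_card hss
  exact Finset.eq_of_subset_of_card_le hsub (by rw [Nat.card_Icc]; omega)

lemma relLoc_le_iff (L k m : ℕ) (s π : ℕ → ℕ)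
    (hvo : IsVerticalOrder L k s π) (hm : m ≤ k)
    (hcl : ∀ j, 1 ≤ j → j ≤ m → π j ≠ 0)
    (hcl' : ∀ j, 1 ≤ j → j ≤ k → π j ≠ 0 → j ≤ m)
    (i ℓ : ℕ) (hi1 : 1 ≤ i) (him : i ≤ m) :
    (relLoc π i ≤ ℓ ↔ i ≤ ∑ c ∈ Finset.Icc 1 L, min (s c) ℓ) := by
  classical
  set A := (Finset.Icc 1 k).filter (fun j => π j ≠ 0 ∧ relLoc π j ≤ ℓ) with hA
  have hcard : A.card = ∑ c ∈ Finset.Icc 1 L, min (s c) ℓ := by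
    have hU : A = (Finset.Icc 1 L).biUnion
        (fun c => (Finset.Icc 1 k).filter (fun j => π j = c ∧ relLoc π j ≤ ℓ)) := by
      ext j
      simp only [hA, Finset.mem_filter, Finset.mem_biUnion]
      constructor
      · rintro ⟨hj, hj0, hjl⟩
        have hjk := Finset.mem_Icc.mp hj
        exact ⟨π j, Finset.mem_Icc.mpr ⟨Nat.one_le_iff_ne_zero.mpr hj0,
          hvo.1.1 j hjk.1 hjk.2⟩, hj, rfl, hjl⟩
      · rintro ⟨c, hc, hj, rfl, hjl⟩
        exact ⟨hj, Nat.one_le_iff_ne_zero.mp (Finset.mem_Icc.mp hc).1, hjl⟩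
    rw [hU, Finset.card_biUnion]
    · refine Finset.sum_congr rfl fun c hc => ?_
      rw [cluster_filter_card, hvo.1.2 c (Finset.mem_Icc.mp hc).2]
    · intro c hc c' hc' hne
      rw [Function.onFun, Finset.disjoint_left]
      intro x hx hx'
      have h1 := (Finset.mem_filter.mp hx).2.1
      have h2 := (Finset.mem_filter.mp hx').2.1
      exact hne (h1 ▸ h2 ▸ rfl)
  have hdcA : A = Finset.Icc 1 A.card := by
    apply dc_eq_Icc
    · intro j hj
      exact (Finset.mem_Icc.mp (Finset.mem_filter.mp hj).1).1
    · intro j hj i' h1 h2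
      obtain ⟨hjIcc, hj0, hjl⟩ := Finset.mem_filter.mp hj
      have hjk := Finset.mem_Icc.mp hjIcc
      have hjm : j ≤ m := hcl' j hjk.1 hjk.2 hj0
      have hi'0 : π i' ≠ 0 := hcl i' h1 (le_trans h2 hjm)
      refine Finset.mem_filter.mpr ⟨Finset.mem_Icc.mpr ⟨h1, le_trans h2 hjk.2⟩, hi'0, ?_⟩
      rcases eq_or_lt_of_le h2 with rfl | hlt
      · exact hjl
      · exact le_trans (hvo.2 i' j h1 hlt hjk.2 hi'0 hj0).1 hjl
  have hmemA : relLoc π i ≤ ℓ ↔ i ∈ A := by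
    constructor
    · intro h
      exact Finset.mem_filter.mpr ⟨Finset.mem_Icc.mpr ⟨hi1, le_trans him hm⟩,
        hcl i hi1 him, h⟩
    · intro h
      exact (Finset.mem_filter.mp h).2.2
  rw [hmemA, hdcA, Finset.mem_Icc, hcard]
  omega

lemma sum_min_piecewise (L q R' r' ℓ : ℕ) (s : ℕ → ℕ) (hqL : q + 1 ≤ L)
    (h1 : ∀ c, 1 ≤ c → c ≤ q → s c = R') (h2 : s (q+1) = r')
    (h3 : ∀ c, q + 2 ≤ c → s c = 0) :
    ∑ c ∈ Finset.Icc 1 L, min (s c) ℓ = q * min R' ℓ + min r' ℓ := by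
  have hsplit : Finset.Icc 1 L = Finset.Icc 1 (q+1) ∪ Finset.Icc (q+2) L := by
    ext x; simp only [Finset.mem_Icc, Finset.mem_union]; omega
  rw [hsplit, Finset.sum_union (by
    rw [Finset.disjoint_left]; intro x hx hx'
    rw [Finset.mem_Icc] at hx hx'; omega)]
  have h4 : ∑ c ∈ Finset.Icc (q+2) L, min (s c) ℓ = 0 := by
    apply Finset.sum_eq_zero; intro c hc
    rw [h3 c (Finset.mem_Icc.mp hc).1]; simp
  rw [h4, Finset.sum_Icc_succ_top (by omega), h2]
  have h5 : ∑ c ∈ Finset.Icc 1 q, min (s c) ℓ = q * min R' ℓ := by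
    rw [Finset.sum_congr rfl (fun c hc =>
      by rw [h1 c (Finset.mem_Icc.mp hc).1 (Finset.mem_Icc.mp hc).2])]
    rw [Finset.sum_const, Nat.card_Icc, smul_eq_mul]
    congr 1
  rw [h5]; omega


/-- when `R ≤ k ≤ LR` and `R ∤ k`, with `q = ⌊k/R⌋`, `r = k mod R`:
(i) `w_i(π*(s*)) = w_i(π^(k))` for `1 ≤ i ≤ (q+1)r − 1`;
(ii) `w_{(q+1)r}(π*(s*)) − w_{(q+1)r}(π^(k)) = β_I − β_C`;
(iii) `w_k(π*(s*)) = w_k(π^(k)) = (d_C + R − k)·β_C`. -/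
theorem stmt19 (L R k dI dC : ℕ) (βI βC : ℝ)
    (hL : 1 ≤ L) (hR : 2 ≤ R) (hk : 2 ≤ k)
    (hdI : dI = R - 1) (hdC : 1 ≤ dC) (hkd : k ≤ dI + dC)
    (hβ : βC ≤ βI) (hβC : 0 < βC)
    (hkLR : k ≤ L * R) (hRk : R ≤ k) (hndvd : ¬ R ∣ k)
    (q r : ℕ) (hq : q = k / R) (hr : r = k % R)
    (πs : ℕ → ℕ) (hπs : IsVerticalOrder L k (sStar0 R k) πs)
    (πk : ℕ → ℕ) (hπk : IsPiJ L R k k πk) :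
    (∀ i, 1 ≤ i → i ≤ (q + 1) * r - 1 →
      weight dI dC βI βC πs i = weight dI dC βI βC πk i) ∧
    weight dI dC βI βC πs ((q + 1) * r) - weight dI dC βI βC πk ((q + 1) * r) = βI - βC ∧
    (weight dI dC βI βC πs k = ((dC + R - k : ℕ) : ℝ) * βC ∧
      weight dI dC βI βC πk k = ((dC + R - k : ℕ) : ℝ) * βC) := by
  classical
  have hR0 : 0 < R := by omega
  have hkqr : q * R + r = k := by
    rw [hq, hr, mul_comm]
    exact Nat.div_add_mod k R
  have hr1 : 1 ≤ r := by
    rcases Nat.eq_zero_or_pos r with h | h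
    · exact absurd (Nat.dvd_of_mod_eq_zero (by omega)) hndvd
    · exact h
  have hrR : r < R := by rw [hr]; exact Nat.mod_lt k hR0
  have hq1 : 1 ≤ q := by
    rw [hq]; exact (Nat.one_le_div_iff hR0).mpr hRk
  have hqL : q + 1 ≤ L := by
    by_contra h
    have hLq : L ≤ q := by omega
    have : L * R ≤ q * R := Nat.mul_le_mul_right R hLq
    omega
  -- product expansion facts
  have E1 : (q+1) * r = q * r + r := by ring
  have E2 : q * (r+1) = q * r + q := by ring
  have E3 : q * (R-1) + q = q * R := by
    have h : R - 1 + 1 = R := by omega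
    calc q * (R-1) + q = q * ((R-1)+1) := by ring
      _ = q * R := by rw [h]
  have E4 : (q-1) * r + r = q * r := by
    have h : q - 1 + 1 = q := by omega
    calc (q-1) * r + r = ((q-1)+1) * r := by ring
      _ = q * r := by rw [h]
  have E5 : (q-1) * R + R = q * R := by
    have h : q - 1 + 1 = q := by omega
    calc (q-1) * R + R = ((q-1)+1) * R := by ring
      _ = q * R := by rw [h]
  have E6 : q * r ≤ q * R := Nat.mul_le_mul_left q (le_of_lt hrR)
  have E9 : q * (r-1) + q = q * r := by
    have h : r - 1 + 1 = r := by omega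
    calc q * (r-1) + q = q * ((r-1)+1) := by ring
      _ = q * r := by rw [h]
  have E7 : (q-1) * r ≤ (q-1) * R := Nat.mul_le_mul_left (q-1) (le_of_lt hrR)
  have E8 : q * (r+1) ≤ q * R := Nat.mul_le_mul_left q (by omega)
  have hqr1 : 1 ≤ q * r := Nat.mul_pos hq1 hr1
  have hqrk : (q+1) * r + 1 ≤ k := by omega
  -- div/mod facts for k-1
  have hq2 : (k-1) / R = q := by
    apply Nat.div_eq_of_lt_le
    · omega
    · have : (q+1) * R = q * R + R := by ring
      omega
  -- nonzero facts
  have hk1 : 1 ≤ k := by omega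
  have hπs0 : ∀ j, 1 ≤ j → j ≤ k → πs j ≠ 0 := by
    intro j h1 h2 h0
    have hc := hπs.1.2 0 (Nat.zero_le L)
    have hz : sStar0 R k 0 = 0 := by simp [sStar0]
    rw [hz] at hc
    have hemp := Finset.card_eq_zero.mp hc
    have hj : j ∈ (Finset.Icc 1 k).filter (fun j => πs j = 0) :=
      Finset.mem_filter.mpr ⟨Finset.mem_Icc.mpr ⟨h1, h2⟩, h0⟩
    rw [hemp] at hj
    exact absurd hj (Finset.notMem_empty j)
  have hπk0 : ∀ j, 1 ≤ j → j ≤ k - 1 → πk j ≠ 0 := by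
    intro j h1 h2 h0
    have hc := hπk.2.1.2 0 (Nat.zero_le L)
    have hz : sStar1 R k 0 = 1 := by simp [sStar1]
    rw [hz] at hc
    obtain ⟨a, ha⟩ := Finset.card_eq_one.mp hc
    have hkm : k ∈ (Finset.Icc 1 k).filter (fun j => πk j = 0) :=
      Finset.mem_filter.mpr ⟨Finset.mem_Icc.mpr ⟨hk1, le_rfl⟩, hπk.1⟩
    have hjm : j ∈ (Finset.Icc 1 k).filter (fun j => πk j = 0) :=
      Finset.mem_filter.mpr ⟨Finset.mem_Icc.mpr ⟨h1, by omega⟩, h0⟩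
    rw [ha] at hkm hjm
    rw [Finset.mem_singleton] at hkm hjm
    omega
  have hπkcl : ∀ j, 1 ≤ j → j ≤ k → πk j ≠ 0 → j ≤ k - 1 := by
    intro j h1 h2 h3
    rcases eq_or_lt_of_le h2 with rfl | h
    · exact absurd hπk.1 h3
    · omega
  -- the two Iffs
  have hIs : ∀ i ℓ, 1 ≤ i → i ≤ k → (relLoc πs i ≤ ℓ ↔ i ≤ q * min R ℓ + min r ℓ) := by
    intro i ℓ h1 h2
    have hsum : ∑ c ∈ Finset.Icc 1 L, min (sStar0 R k c) ℓ = q * min R ℓ + min r ℓ := by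
      apply sum_min_piecewise L q R r ℓ _ hqL
      · intro c hc1 hc2
        simp only [sStar0, ← hq]
        rw [if_neg (by omega), if_pos (by omega)]
      · simp only [sStar0, ← hq]
        rw [if_neg (by omega), if_neg (by omega), if_pos trivial]
        omega
      · intro c hc
        simp only [sStar0, ← hq]
        rw [if_neg (by omega), if_neg (by omega), if_neg (by omega)]
    rw [← hsum]
    exact relLoc_le_iff L k k (sStar0 R k) πs hπs le_rfl hπs0 (fun j hj1 hj2 _ => hj2) i ℓ h1 h2
  have hIk : ∀ i ℓ, 1 ≤ i → i ≤ k - 1 →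
      (relLoc πk i ≤ ℓ ↔ i ≤ q * min R ℓ + min (r-1) ℓ) := by
    intro i ℓ h1 h2
    have hsum : ∑ c ∈ Finset.Icc 1 L, min (sStar1 R k c) ℓ = q * min R ℓ + min (r-1) ℓ := by
      apply sum_min_piecewise L q R (r-1) ℓ _ hqL
      · intro c hc1 hc2
        simp only [sStar1, hq2]
        rw [if_neg (by omega), if_pos (by omega)]
      · simp only [sStar1, hq2]
        rw [if_neg (by omega), if_neg (by omega), if_pos trivial]
        omega
      · intro c hc
        simp only [sStar1, hq2]
        rw [if_neg (by omega), if_neg (by omega), if_neg (by omega)]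
    rw [← hsum]
    exact relLoc_le_iff L k (k-1) (sStar1 R k) πk hπk.2 (by omega) hπk0 hπkcl i ℓ h1 h2
  have hminR : ∀ x, x ≤ R → min R x = x := fun x h => min_eq_right h
  refine ⟨?_, ?_, ?_, ?_⟩
  · -- part (i)
    intro i hi1 hi2
    have hik1 : i ≤ k - 1 := by omega
    have hik : i ≤ k := by omega
    have hab : relLoc πs i = relLoc πk i := by
      set a := relLoc πs i with hadef
      set b := relLoc πk i with hbdef
      have ha1 : i ≤ q * min R a + min r a := (hIs i a hi1 hik).mp le_rfl
      have hb1 : i ≤ q * min R b + min (r-1) b := (hIk i b hi1 hik1).mp le_rfl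
      have hle1 : a ≤ b := (hIs i b hi1 hik).mpr (by omega)
      have hle2 : b ≤ a := by
        apply (hIk i a hi1 hik1).mpr
        rcases Nat.lt_or_ge a r with hcase | hcase
        · omega
        · have hmm : q * r ≤ q * min R a := Nat.mul_le_mul_left q (by omega)
          omega
      omega
    simp only [weight, aCoef, bCoef, if_neg (hπs0 i hi1 hik), if_neg (hπk0 i hi1 hik1), hab]
  · -- part (ii)
    set m := (q+1) * r with hm
    have hm1 : 1 ≤ m := by omega
    have hmk1 : m ≤ k - 1 := by omega
    have hmk : m ≤ k := by omega
    have hrs : relLoc πs m = r := by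
      have h1 : relLoc πs m ≤ r := by
        apply (hIs m r hm1 hmk).mpr
        rw [hminR r (le_of_lt hrR)]
        omega
      have h2 : ¬ relLoc πs m ≤ r - 1 := by
        intro h
        have := (hIs m (r-1) hm1 hmk).mp h
        rw [hminR (r-1) (by omega)] at this
        omega
      omega
    have hrk : relLoc πk m = r + 1 := by
      have h1 : relLoc πk m ≤ r + 1 := by
        apply (hIk m (r+1) hm1 hmk1).mpr
        rw [hminR (r+1) (by omega)]
        omega
      have h2 : ¬ relLoc πk m ≤ r := by
        intro h
        have := (hIk m r hm1 hmk1).mp h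
        rw [hminR r (le_of_lt hrR)] at this
        omega
      omega
    have hmrdC : m - r ≤ dC := by omega
    have hmr1 : r + 1 ≤ m := by omega
    have hrdI : r ≤ dI := by omega
    have hws : weight dI dC βI βC πs m
        = ((dI + 1 - r : ℕ) : ℝ) * βI + ((dC - (m - r) : ℕ) : ℝ) * βC := by
      simp only [weight, aCoef, bCoef, if_neg (hπs0 m hm1 hmk), hrs]
    have hwk : weight dI dC βI βC πk m
        = ((dI + 1 - (r+1) : ℕ) : ℝ) * βI + ((dC - (m - (r+1)) : ℕ) : ℝ) * βC := by
      simp only [weight, aCoef, bCoef, if_neg (hπk0 m hm1 hmk1), hrk]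
    have e1 : dI + 1 - r = (dI + 1 - (r+1)) + 1 := by omega
    have e2 : dC - (m - (r+1)) = (dC - (m - r)) + 1 := by omega
    rw [hws, hwk, e1, e2]
    push_cast
    ring
  · -- part (iii) πs
    have hRs : relLoc πs k = R := by
      have h1 : relLoc πs k ≤ R := by
        apply (hIs k R hk1 le_rfl).mpr
        rw [min_self, min_eq_left (le_of_lt hrR)]
        omega
      have h2 : ¬ relLoc πs k ≤ R - 1 := by
        intro h
        have := (hIs k (R-1) hk1 le_rfl).mp h
        rw [hminR (R-1) (by omega)] at this
        have : min r (R-1) = r := by omega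
        omega
      omega
    have ha : aCoef dI πs k = 0 := by simp only [aCoef, hRs]; omega
    have hb : bCoef dC πs k = dC + R - k := by simp only [bCoef, hRs]; omega
    simp only [weight, if_neg (hπs0 k hk1 le_rfl), ha, hb]
    push_cast
    ring
  · -- part (iii) πk
    have he : dI + dC + 1 - k = dC + R - k := by omega
    simp only [weight, if_pos hπk.1, he]
end
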